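/- Let d : ℕ with 1 ≤ d, let A : Matrix (Fin d) (Fin d) ℝ and let v : Fin d → ℝ be nonzero. Then the determinant of the (d+1) × (d+1) bordered matrix Matrix.fromBlocks A (Matrix.col v) (Matrix.row v) 0 is nonzero if and only if every X : Fin d → ℝ with v ⬝ᵥ X = 0 and A.mulVec X ∈ ℝ ∙ v (i.e. there exists c : ℝ with A.mulVec X = c • v) satisfies X = 0. (This is the equivalence between the geometric Iso-energetic condition and its usual bordered-Hessian determinant formulation in action coordinates.) -/

import Mathlib

open Matrix

lemma col_mulVec_aux (d : ℕ) (v : Fin d → ℝ) (y : Unit → ℝ) :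
    (Matrix.replicateCol Unit v) *ᵥ y = y () • v := by
  ext i
  simp [Matrix.mulVec, dotProduct, Matrix.replicateCol, mul_comm]

lemma row_mulVec_aux (d : ℕ) (v : Fin d → ℝ) (x : Fin d → ℝ) :
    (Matrix.replicateRow Unit v) *ᵥ x = fun _ => v ⬝ᵥ x := by
  ext i
  simp [Matrix.mulVec, Matrix.replicateRow]

/-- The bordered-determinant formulation of the Iso-energetic condition: for a matrix `A`
and a nonzero vector `v`, the determinant of the bordered matrix `[[A, v], [vᵀ, 0]]` is
nonzero iff every `X` with `v ⬝ᵥ X = 0` and `A.mulVec X ∈ ℝ ∙ v` vanishes. -/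
theorem bordered_det_iff_isoenergetic (d : ℕ) (hd : 1 ≤ d)
    (A : Matrix (Fin d) (Fin d) ℝ) (v : Fin d → ℝ) (hv : v ≠ 0) :
    (Matrix.fromBlocks A (Matrix.replicateCol Unit v) (Matrix.replicateRow Unit v) 0).det ≠ 0 ↔
    (∀ X : Fin d → ℝ, v ⬝ᵥ X = 0 → (∃ c : ℝ, A.mulVec X = c • v) → X = 0) := by
  rw [Ne, ← Matrix.exists_mulVec_eq_zero_iff]
  constructor
  · intro hdet X hvX ⟨c, hc⟩
    by_contra hX
    apply hdet
    refine ⟨Sum.elim X (fun _ => -c), ?_, ?_⟩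
    · intro h
      apply hX
      funext i
      exact congrFun h (Sum.inl i)
    · rw [Matrix.fromBlocks_mulVec]
      funext i
      cases i with
      | inl i =>
        simp [col_mulVec_aux, hc, Sum.elim_comp_inl, Sum.elim_comp_inr]
      | inr i =>
        simp [row_mulVec_aux, hvX, Sum.elim_comp_inl]
  · rintro h ⟨Y, hY0, hY⟩
    rw [Matrix.fromBlocks_mulVec] at hY
    have h1 : A.mulVec (Y ∘ Sum.inl) + (Matrix.replicateCol Unit v) *ᵥ (Y ∘ Sum.inr) = 0 := by
      funext i; exact congrFun hY (Sum.inl i)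
    have h2 : v ⬝ᵥ (Y ∘ Sum.inl) = 0 := by
      have := congrFun hY (Sum.inr ())
      simpa [row_mulVec_aux] using this
    rw [col_mulVec_aux] at h1
    have hX : Y ∘ Sum.inl = 0 := by
      refine h _ h2 ⟨-(Y (Sum.inr ())), ?_⟩
      have := eq_neg_of_add_eq_zero_left h1
      rw [this]
      simp
    have hc : Y (Sum.inr ()) = 0 := by
      rw [hX] at h1
      simp at h1
      rcases h1 with h1 | h1
      · exact h1
      · exact absurd h1 hv
    apply hY0
    funext i
    cases i with
    | inl i => exact congrFun hX i
    | inr i => cases i; exact hc
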